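/- If p and p+2 are both prime, p ≥ 5, and φ(p−1)/(p−1) ≤ φ(p+1)/(p+1), then ∏_{r | p−1, r prime, r ≥ 5} (1 + 1/(r−1)) ≥ 3/2. -/

import Mathlib

theorem stmt_9 (p : ℕ) (hp : p.Prime) (hp2 : (p + 2).Prime) (h5 : 5 ≤ p)
    (h : (Nat.totient (p - 1) : ℚ) / ((p : ℚ) - 1) ≤ (Nat.totient (p + 1) : ℚ) / ((p : ℚ) + 1)) :
    (3 / 2 : ℚ) ≤ ∏ r ∈ (p - 1).primeFactors.filter (fun r => 5 ≤ r),
      (1 + 1 / ((r : ℚ) - 1)) := by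
  -- parity and mod-3 facts
  have hodd : ¬ (2 ∣ p) := by
    intro hd
    rcases (Nat.prime_dvd_prime_iff_eq Nat.prime_two hp).mp hd with rfl
    omega
  have hodd' : p % 2 = 1 := by omega
  have h3p : ¬ (3 ∣ p) := by
    intro hd
    rcases (Nat.prime_dvd_prime_iff_eq Nat.prime_three hp).mp hd with rfl
    omega
  have h3p2 : ¬ (3 ∣ p + 2) := by
    intro hd
    rcases (Nat.prime_dvd_prime_iff_eq Nat.prime_three hp2).mp hd with heq
    omega
  have hmod3 : p % 3 = 2 := by omega
  have h2dvd1 : 2 ∣ p - 1 := by omega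
  have h3ndvd1 : ¬ (3 ∣ p - 1) := by omega
  have h2dvd2 : 2 ∣ p + 1 := by omega
  have h3dvd2 : 3 ∣ p + 1 := by omega
  have hne1 : p - 1 ≠ 0 := by omega
  have hne2 : p + 1 ≠ 0 := by omega
  -- low prime factors
  have hfilt1 : (p - 1).primeFactors.filter (fun r => ¬ 5 ≤ r) = {2} := by
    ext r
    simp only [Finset.mem_filter, Nat.mem_primeFactors, Finset.mem_singleton]
    constructor
    · rintro ⟨⟨hr, hrd, -⟩, hr5⟩
      have h2r := hr.two_le
      interval_cases r
      · rfl
      · exact absurd hrd h3ndvd1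
      · exact absurd hr (by norm_num)
    · rintro rfl
      exact ⟨⟨Nat.prime_two, h2dvd1, hne1⟩, by omega⟩
  have hfilt2 : (p + 1).primeFactors.filter (fun r => ¬ 5 ≤ r) = {2, 3} := by
    ext r
    simp only [Finset.mem_filter, Nat.mem_primeFactors, Finset.mem_insert, Finset.mem_singleton]
    constructor
    · rintro ⟨⟨hr, hrd, -⟩, hr5⟩
      have h2r := hr.two_le
      interval_cases r
      · exact Or.inl rfl
      · exact Or.inr rfl
      · exact absurd hr (by norm_num)
    · rintro (rfl | rfl)
      · exact ⟨⟨Nat.prime_two, h2dvd2, hne2⟩, by omega⟩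
      · exact ⟨⟨Nat.prime_three, h3dvd2, hne2⟩, by omega⟩
  -- totient formulas
  have hcast1 : ((p - 1 : ℕ) : ℚ) = (p : ℚ) - 1 := by
    push_cast [Nat.cast_sub (by omega : 1 ≤ p)]; ring
  have hp1pos : (0 : ℚ) < (p : ℚ) - 1 := by
    have : (5 : ℚ) ≤ (p : ℚ) := by exact_mod_cast h5
    linarith
  have hp2pos : (0 : ℚ) < (p : ℚ) + 1 := by
    have : (5 : ℚ) ≤ (p : ℚ) := by exact_mod_cast h5
    linarith
  have ht1 : (Nat.totient (p - 1) : ℚ) / ((p : ℚ) - 1)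
      = ∏ r ∈ (p - 1).primeFactors, (1 - (r : ℚ)⁻¹) := by
    rw [Nat.totient_eq_mul_prod_factors, hcast1, mul_div_assoc, mul_comm, div_mul_cancel₀ _ hp1pos.ne']
  have ht2 : (Nat.totient (p + 1) : ℚ) / ((p : ℚ) + 1)
      = ∏ r ∈ (p + 1).primeFactors, (1 - (r : ℚ)⁻¹) := by
    rw [Nat.totient_eq_mul_prod_factors]
    push_cast
    rw [mul_div_assoc, mul_comm, div_mul_cancel₀ _ hp2pos.ne']
  -- split products
  set A : ℚ := ∏ r ∈ (p - 1).primeFactors.filter (fun r => 5 ≤ r), (1 - (r : ℚ)⁻¹) with hA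
  set B : ℚ := ∏ r ∈ (p + 1).primeFactors.filter (fun r => 5 ≤ r), (1 - (r : ℚ)⁻¹) with hB
  have hsplit1 : ∏ r ∈ (p - 1).primeFactors, (1 - (r : ℚ)⁻¹) = A * (1 - (2 : ℚ)⁻¹) := by
    rw [← Finset.prod_filter_mul_prod_filter_not (p - 1).primeFactors (fun r => 5 ≤ r), hfilt1]
    norm_num
    rfl
  have hsplit2 : ∏ r ∈ (p + 1).primeFactors, (1 - (r : ℚ)⁻¹) = B * ((1 - (2 : ℚ)⁻¹) * (1 - (3 : ℚ)⁻¹)) := by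
    rw [← Finset.prod_filter_mul_prod_filter_not (p + 1).primeFactors (fun r => 5 ≤ r), hfilt2]
    norm_num
    rfl
  have hBle : B ≤ 1 := by
    apply Finset.prod_le_one
    · intro r hr
      simp only [Finset.mem_filter] at hr
      have : (5 : ℚ) ≤ (r : ℚ) := by exact_mod_cast hr.2
      have : (0:ℚ) < r := by linarith
      rw [sub_nonneg, inv_le_one_iff₀]
      right; linarith
    · intro r hr
      have : (0:ℚ) ≤ (r:ℚ)⁻¹ := by positivity
      linarith
  have hApos : 0 < A := by
    apply Finset.prod_pos
    intro r hr
    simp only [Finset.mem_filter] at hr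
    have : (5 : ℚ) ≤ (r : ℚ) := by exact_mod_cast hr.2
    have h1 : (r:ℚ)⁻¹ ≤ 5⁻¹ := by
      apply inv_anti₀ <;> norm_num <;> linarith
    rw [sub_pos]
    calc (r:ℚ)⁻¹ ≤ 5⁻¹ := h1
      _ < 1 := by norm_num
  have hAle : A ≤ 2 / 3 := by
    rw [ht1, ht2, hsplit1, hsplit2] at h
    nlinarith
  -- relate target to A
  have hTA : (∏ r ∈ (p - 1).primeFactors.filter (fun r => 5 ≤ r), (1 + 1 / ((r : ℚ) - 1))) * A = 1 := by
    rw [hA, ← Finset.prod_mul_distrib]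
    apply Finset.prod_eq_one
    intro r hr
    simp only [Finset.mem_filter] at hr
    have h5r : (5 : ℚ) ≤ (r : ℚ) := by exact_mod_cast hr.2
    have hr0 : (r : ℚ) ≠ 0 := by linarith
    have hr1 : (r : ℚ) - 1 ≠ 0 := by intro hc; linarith [sub_eq_zero.mp hc]
    field_simp
    ring
  have hTpos : (∏ r ∈ (p - 1).primeFactors.filter (fun r => 5 ≤ r), (1 + 1 / ((r : ℚ) - 1))) = A⁻¹ :=
    eq_inv_of_mul_eq_one_left hTA
  rw [hTpos, show (3/2 : ℚ) = (2/3 : ℚ)⁻¹ by norm_num]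
  exact inv_anti₀ hApos hAle
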